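/- Let N be an odd positive integer and consider the operator J on functions f : ℤ/Nℤ → ℂ given by (J f)(x) = (1 + cos(π(2x+1)/N)) f(x+1) + 2cos(2πx/N) f(x) + (1 + cos(π(2x−1)/N)) f(x−1) (this is the operator J associated with a = (N−1)/2). Then J is diagonalizable with N distinct real eigenvalues, and every eigenvector of J is an eigenvector of the discrete Fourier transform F_N; in particular, J's eigenvectors form an orthogonal eigenbasis of F_N on L²(ℤ/Nℤ). -/

import Mathlib

open Complex

/-- The (non-normalized) discrete Fourier transform on `ZMod N`:
`(dft N f) k = ∑_{j=0}^{N-1} exp(-2πi j k / N) f(j)`. -/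
noncomputable def dft (N : ℕ) (f : ZMod N → ℂ) : ZMod N → ℂ := fun k =>
  ∑ j ∈ Finset.range N,
    Complex.exp (-(2 * Real.pi * Complex.I * (j : ℂ) * (k.val : ℂ)) / (N : ℂ)) * f (j : ZMod N)


/-- The operator `J` associated with `a = (N−1)/2`:
`(J f)(x) = (1 + cos(π(2x+1)/N)) f(x+1) + 2cos(2πx/N) f(x) + (1 + cos(π(2x−1)/N)) f(x−1)`. -/
noncomputable def Jbig (N : ℕ) (f : ZMod N → ℂ) : ZMod N → ℂ := fun x =>
  ((1 + Real.cos (Real.pi * (2 * (x.val : ℝ) + 1) / N) : ℝ) : ℂ) * f (x + 1) +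
    ((2 * Real.cos (2 * Real.pi * (x.val : ℝ) / N) : ℝ) : ℂ) * f x +
    ((1 + Real.cos (Real.pi * (2 * (x.val : ℝ) - 1) / N) : ℝ) : ℂ) * f (x - 1)

set_option linter.unusedVariables false
set_option linter.unusedSectionVars false
set_option maxHeartbeats 1000000

namespace St19
variable (N : ℕ) [NeZero N]

noncomputable def ee (m : ℤ) : ℂ := Complex.exp (Real.pi * Complex.I * m / N)

lemma ee_eq_pow (m : ℤ) : ee N m = (ee N 1) ^ m := by
  rw [ee, ee, ← Complex.exp_int_mul]
  congr 1
  push_cast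
  ring

lemma ee_ne_zero (m : ℤ) : ee N m ≠ 0 := Complex.exp_ne_zero _

lemma ee_add (m n : ℤ) : ee N (m + n) = ee N m * ee N n := by
  rw [ee, ee, ee, ← Complex.exp_add]
  congr 1
  have hN : (N : ℂ) ≠ 0 := Nat.cast_ne_zero.mpr (NeZero.ne N)
  field_simp
  push_cast
  ring

lemma ee_zero : ee N 0 = 1 := by simp [ee]

lemma fuse (m n s : ℤ) (h : m + n = s) : ee N m * ee N n = ee N s := by
  rw [← ee_add, h]

lemma ee_twoN : ee N (2 * (N : ℤ)) = 1 := by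
  have hN : (N : ℂ) ≠ 0 := Nat.cast_ne_zero.mpr (NeZero.ne N)
  rw [ee]
  have : (Real.pi : ℂ) * Complex.I * ((2 * (N:ℤ) : ℤ) : ℂ) / N = 2 * Real.pi * Complex.I := by
    push_cast; field_simp
  rw [this, Complex.exp_two_pi_mul_I]

lemma ee_congr {m n : ℤ} (h : (2 * (N : ℤ)) ∣ (m - n)) : ee N m = ee N n := by
  obtain ⟨t, ht⟩ := h
  have hm : m = n + 2 * (N:ℤ) * t := by linarith
  have h2 : ee N (2 * (N:ℤ) * t) = (ee N (2 * (N:ℤ))) ^ t := by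
    rw [ee_eq_pow N (2 * (N:ℤ) * t), ee_eq_pow N (2 * (N:ℤ)), ← zpow_mul]
  rw [hm, ee_add, h2, ee_twoN, one_zpow, mul_one]

lemma ee_conj (m : ℤ) : (starRingEnd ℂ) (ee N m) = ee N (-m) := by
  rw [ee, ee, ← Complex.exp_conj]
  congr 1
  simp [map_div₀]

noncomputable def Bz (x : ℤ) : ℂ := 1 + (ee N (2 * x + 1) + ee N (-(2 * x + 1))) / 2
noncomputable def Dz (x : ℤ) : ℂ := ee N (2 * x) + ee N (-(2 * x))

lemma Bz_congr {m n : ℤ} (h : (N : ℤ) ∣ (m - n)) : Bz N m = Bz N n := by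
  obtain ⟨t, ht⟩ := h
  have h1 : (2 * (N:ℤ)) ∣ ((2*m+1) - (2*n+1)) := ⟨t, by linarith⟩
  have h2 : (2 * (N:ℤ)) ∣ ((-(2*m+1)) - (-(2*n+1))) := ⟨-t, by linarith⟩
  rw [Bz, Bz, ee_congr N h1, ee_congr N h2]

lemma Bz_conj (m : ℤ) : (starRingEnd ℂ) (Bz N m) = Bz N m := by
  simp [Bz, map_add, map_div₀, ee_conj, map_ofNat]
  ring

lemma Dz_conj (m : ℤ) : (starRingEnd ℂ) (Dz N m) = Dz N m := by
  simp [Dz, map_add, ee_conj]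
  ring

lemma key_identity (j k : ℤ) :
    Bz N (j - 1) * ee N (2 * k) + Dz N j + Bz N j * ee N (-(2 * k)) =
    Bz N (k - 1) * ee N (2 * j) + Dz N k + Bz N k * ee N (-(2 * j)) := by
  have expand : ∀ (X Y C : ℂ), (1 + (X + Y)/2) * C = C + (X*C + Y*C)/2 := by
    intros; ring
  simp only [Bz, Dz, expand]
  rw [fuse N _ _ (2*j+2*k-1) (by ring), fuse N _ _ (2*k-2*j+1) (by ring),
      fuse N _ _ (2*j-2*k+1) (by ring), fuse N _ _ (-(2*j+2*k)-1) (by ring),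
      fuse N _ _ (2*j+2*k-1) (by ring), fuse N _ _ (2*j-2*k+1) (by ring),
      fuse N _ _ (2*k-2*j+1) (by ring), fuse N _ _ (-(2*j+2*k)-1) (by ring)]
  ring

/-- If `m : ℤ` reduces to `x : ZMod N`, then `N ∣ x.val - m`. -/
lemma val_dvd_sub (x : ZMod N) (m : ℤ) (h : ((m : ℤ) : ZMod N) = x) :
    (N : ℤ) ∣ ((x.val : ℤ) - m) := by
  apply (ZMod.intCast_zmod_eq_zero_iff_dvd _ N).mp
  push_cast
  rw [ZMod.natCast_rightInverse x, h, sub_self]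

lemma cast_val_add_one (x : ZMod N) : (((x.val : ℤ) + 1 : ℤ) : ZMod N) = x + 1 := by
  push_cast
  rw [ZMod.natCast_rightInverse x]

lemma cast_val_sub_one (x : ZMod N) : (((x.val : ℤ) - 1 : ℤ) : ZMod N) = x - 1 := by
  push_cast
  rw [ZMod.natCast_rightInverse x]

lemma Bz_val_sub (j : ZMod N) : Bz N (((j - 1).val : ℤ)) = Bz N ((j.val : ℤ) - 1) :=
  Bz_congr N (val_dvd_sub N (j-1) ((j.val:ℤ)-1) (cast_val_sub_one N j))

lemma Bz_val_add (j : ZMod N) : Bz N (((j + 1).val : ℤ) - 1) = Bz N ((j.val : ℤ)) := by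
  apply Bz_congr N
  obtain ⟨t, ht⟩ := val_dvd_sub N (j+1) ((j.val:ℤ)+1) (cast_val_add_one N j)
  exact ⟨t, by linarith⟩

lemma cos_eq_ee (m : ℤ) : Complex.cos ((Real.pi : ℂ) * m / N) = (ee N m + ee N (-m)) / 2 := by
  have h1 : ee N m = Complex.exp (((Real.pi : ℂ) * m / N) * Complex.I) := by
    rw [ee]; congr 1; ring
  have h2 : ee N (-m) = Complex.exp (-((Real.pi : ℂ) * m / N) * Complex.I) := by
    rw [ee]; congr 1; push_cast; ring
  rw [h1, h2, Complex.exp_mul_I, Complex.exp_mul_I, Complex.cos_neg, Complex.sin_neg]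
  ring

lemma coef1 (v : ℕ) :
    ((1 + Real.cos (Real.pi * (2 * (v : ℝ) + 1) / N) : ℝ) : ℂ) = Bz N (v : ℤ) := by
  have harg : ((Real.pi * (2 * (v : ℝ) + 1) / N : ℝ) : ℂ)
      = (Real.pi : ℂ) * ((2 * (v:ℤ) + 1 : ℤ) : ℂ) / N := by push_cast; ring
  rw [Complex.ofReal_add, Complex.ofReal_one, Complex.ofReal_cos, harg, cos_eq_ee, Bz]

lemma coef2 (v : ℕ) :
    ((2 * Real.cos (2 * Real.pi * (v : ℝ) / N) : ℝ) : ℂ) = Dz N (v : ℤ) := by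
  have harg : ((2 * Real.pi * (v : ℝ) / N : ℝ) : ℂ)
      = (Real.pi : ℂ) * ((2 * (v:ℤ) : ℤ) : ℂ) / N := by push_cast; ring
  rw [Complex.ofReal_mul, Complex.ofReal_ofNat, Complex.ofReal_cos, harg, cos_eq_ee, Dz]
  ring

lemma coef3 (v : ℕ) :
    ((1 + Real.cos (Real.pi * (2 * (v : ℝ) - 1) / N) : ℝ) : ℂ) = Bz N ((v : ℤ) - 1) := by
  have harg : ((Real.pi * (2 * (v : ℝ) - 1) / N : ℝ) : ℂ)
      = (Real.pi : ℂ) * ((2 * ((v:ℤ) - 1) + 1 : ℤ) : ℂ) / N := by push_cast; ring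
  rw [Complex.ofReal_add, Complex.ofReal_one, Complex.ofReal_cos, harg, cos_eq_ee, Bz]

lemma Jbig_eq (f : ZMod N → ℂ) (x : ZMod N) :
    Jbig N f x = Bz N ((x.val : ℤ)) * f (x + 1) + Dz N ((x.val : ℤ)) * f x
      + Bz N ((x.val : ℤ) - 1) * f (x - 1) := by
  rw [Jbig, coef1, coef2, coef3]

lemma dft_eq (f : ZMod N → ℂ) (k : ZMod N) :
    dft N f k = ∑ j : ZMod N, ee N (-(2 * (j.val : ℤ) * (k.val : ℤ))) * f j := by
  rw [dft]
  apply Finset.sum_nbij' (fun a => ((a : ℕ) : ZMod N)) (fun x => x.val)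
  · intro a _; exact Finset.mem_univ _
  · intro x _; exact Finset.mem_range.mpr (ZMod.val_lt x)
  · intro a ha; exact ZMod.val_cast_of_lt (Finset.mem_range.mp ha)
  · intro x _; exact ZMod.natCast_rightInverse x
  · intro a ha
    congr 1
    · rw [ee]
      congr 1
      rw [ZMod.val_cast_of_lt (Finset.mem_range.mp ha)]
      push_cast
      ring

lemma ee_shift_left (j k : ZMod N) (s : ℤ) (hs : ((s : ℤ) : ZMod N) = j) :
    ee N (-(2 * ((j).val : ℤ) * (k.val : ℤ)))
      = ee N (-(2 * s * (k.val : ℤ))) := by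
  apply ee_congr
  obtain ⟨t, ht⟩ := val_dvd_sub N j s hs
  exact ⟨-(k.val : ℤ) * t, by linear_combination (-2*(k.val:ℤ)) * ht⟩

lemma ee_shift_right (j k : ZMod N) (s : ℤ) (hs : ((s : ℤ) : ZMod N) = k) :
    ee N (-(2 * ((j.val) : ℤ) * ((k).val : ℤ)))
      = ee N (-(2 * (j.val : ℤ) * s)) := by
  apply ee_congr
  obtain ⟨t, ht⟩ := val_dvd_sub N k s hs
  exact ⟨-(j.val : ℤ) * t, by linear_combination (-2*(j.val:ℤ)) * ht⟩

lemma pointwise (j k : ZMod N) :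
    ee N (-(2 * ((j-1).val : ℤ) * (k.val : ℤ))) * Bz N (((j-1).val : ℤ))
      + ee N (-(2 * (j.val : ℤ) * (k.val : ℤ))) * Dz N ((j.val : ℤ))
      + ee N (-(2 * ((j+1).val : ℤ) * (k.val : ℤ))) * Bz N (((j+1).val : ℤ) - 1)
    = Bz N ((k.val : ℤ)) * ee N (-(2 * (j.val : ℤ) * ((k+1).val : ℤ)))
      + Dz N ((k.val : ℤ)) * ee N (-(2 * (j.val : ℤ) * (k.val : ℤ)))
      + Bz N ((k.val : ℤ) - 1) * ee N (-(2 * (j.val : ℤ) * ((k-1).val : ℤ))) := by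
  rw [Bz_val_sub, Bz_val_add,
      ee_shift_left N (j-1) k ((j.val:ℤ)-1) (cast_val_sub_one N j),
      ee_shift_left N (j+1) k ((j.val:ℤ)+1) (cast_val_add_one N j),
      ee_shift_right N j (k+1) ((k.val:ℤ)+1) (cast_val_add_one N k),
      ee_shift_right N j (k-1) ((k.val:ℤ)-1) (cast_val_sub_one N k)]
  have e1 : ee N (-(2 * ((j.val:ℤ) - 1) * (k.val:ℤ)))
      = ee N (-(2 * (j.val:ℤ) * (k.val:ℤ))) * ee N (2 * (k.val:ℤ)) := by
    rw [← ee_add]; congr 1; ring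
  have e2 : ee N (-(2 * ((j.val:ℤ) + 1) * (k.val:ℤ)))
      = ee N (-(2 * (j.val:ℤ) * (k.val:ℤ))) * ee N (-(2 * (k.val:ℤ))) := by
    rw [← ee_add]; congr 1; ring
  have e3 : ee N (-(2 * (j.val:ℤ) * ((k.val:ℤ) + 1)))
      = ee N (-(2 * (j.val:ℤ) * (k.val:ℤ))) * ee N (-(2 * (j.val:ℤ))) := by
    rw [← ee_add]; congr 1; ring
  have e4 : ee N (-(2 * (j.val:ℤ) * ((k.val:ℤ) - 1)))
      = ee N (-(2 * (j.val:ℤ) * (k.val:ℤ))) * ee N (2 * (j.val:ℤ)) := by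
    rw [← ee_add]; congr 1; ring
  rw [e1, e2, e3, e4]
  linear_combination (ee N (-(2 * (j.val:ℤ) * (k.val:ℤ)))) * key_identity N (j.val:ℤ) (k.val:ℤ)

theorem dft_Jbig_comm (f : ZMod N → ℂ) : dft N (Jbig N f) = Jbig N (dft N f) := by
  funext k
  rw [Jbig_eq]
  simp only [dft_eq]
  simp only [Jbig_eq, mul_add, Finset.sum_add_distrib, Finset.mul_sum]
  have r1 : (∑ j : ZMod N, ee N (-(2 * ((j).val : ℤ) * (k.val : ℤ)))
        * (Bz N ((j.val : ℤ)) * f (j + 1)))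
      = ∑ j : ZMod N, ee N (-(2 * ((j-1).val : ℤ) * (k.val : ℤ)))
        * (Bz N (((j-1).val : ℤ)) * f j) := by
    rw [← Equiv.sum_comp (Equiv.subRight (1 : ZMod N))
      (fun j => ee N (-(2 * ((j).val : ℤ) * (k.val : ℤ))) * (Bz N ((j.val : ℤ)) * f (j + 1)))]
    simp [Equiv.subRight]
  have r3 : (∑ j : ZMod N, ee N (-(2 * ((j).val : ℤ) * (k.val : ℤ)))
        * (Bz N ((j.val : ℤ) - 1) * f (j - 1)))
      = ∑ j : ZMod N, ee N (-(2 * ((j+1).val : ℤ) * (k.val : ℤ)))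
        * (Bz N (((j+1).val : ℤ) - 1) * f j) := by
    rw [← Equiv.sum_comp (Equiv.addRight (1 : ZMod N))
      (fun j => ee N (-(2 * ((j).val : ℤ) * (k.val : ℤ))) * (Bz N ((j.val : ℤ) - 1) * f (j - 1)))]
    simp [Equiv.addRight]
  rw [r1, r3, ← Finset.sum_add_distrib, ← Finset.sum_add_distrib,
      ← Finset.sum_add_distrib, ← Finset.sum_add_distrib]
  apply Finset.sum_congr rfl
  intro j _
  linear_combination (f j) * pointwise N j k

/-- The special point where the off-diagonal coefficient vanishes. -/
def m0 : ZMod N := (((N - 1) / 2 : ℕ) : ZMod N)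

lemma m0_val : (m0 N).val = (N - 1) / 2 := by
  apply ZMod.val_cast_of_lt
  have h1 : 1 ≤ N := Nat.one_le_iff_ne_zero.mpr (NeZero.ne N)
  omega

lemma Bz_m0 (hodd : Odd N) : Bz N (((m0 N).val : ℤ)) = 0 := by
  rw [← coef1]
  have h1 : 1 ≤ N := Nat.one_le_iff_ne_zero.mpr (NeZero.ne N)
  have hNr : (N : ℝ) ≠ 0 := Nat.cast_ne_zero.mpr (NeZero.ne N)
  have hv : 2 * (((m0 N).val : ℝ)) + 1 = N := by
    obtain ⟨r, hr⟩ := hodd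
    rw [m0_val]
    have : (N - 1) / 2 = r := by omega
    rw [this]
    push_cast [hr]
    ring
  rw [hv]
  rw [mul_div_assoc, div_self hNr, mul_one, Real.cos_pi]
  norm_num

lemma Bz_ne (hodd : Odd N) (x : ZMod N) (hx : x ≠ m0 N) : Bz N ((x.val : ℤ)) ≠ 0 := by
  rw [← coef1]
  rw [Ne, Complex.ofReal_eq_zero]
  intro h
  have hcos : Real.cos (Real.pi * (2 * (x.val : ℝ) + 1) / N) = -1 := by linarith
  obtain ⟨k, hk⟩ := Real.cos_eq_neg_one_iff.mp hcos
  have hNr : (N : ℝ) ≠ 0 := Nat.cast_ne_zero.mpr (NeZero.ne N)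
  have hπ : Real.pi ≠ 0 := Real.pi_ne_zero
  have hreal : ((1 + 2 * k : ℤ) : ℝ) * N = 2 * (x.val : ℝ) + 1 := by
    have h2 : (Real.pi + k * (2 * Real.pi)) * N = Real.pi * (2 * (x.val : ℝ) + 1) := by
      rw [hk]; field_simp
    have h3 : Real.pi * (((1 + 2*k : ℤ) : ℝ) * N) = Real.pi * (2 * (x.val : ℝ) + 1) := by
      push_cast
      linear_combination h2
    exact mul_left_cancel₀ hπ h3
  have hint : (1 + 2 * k) * (N : ℤ) = 2 * (x.val : ℤ) + 1 := by exact_mod_cast hreal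
  have hvlt : (x.val : ℤ) < N := by exact_mod_cast ZMod.val_lt x
  have hNpos : (0 : ℤ) < N := by exact_mod_cast Nat.pos_of_ne_zero (NeZero.ne N)
  have hk0 : k = 0 := by nlinarith [ZMod.val_lt x, hint]
  rw [hk0] at hint
  have hx2 : 2 * (x.val : ℤ) + 1 = N := by linarith
  apply hx
  have hvv : x.val = (N - 1) / 2 := by omega
  have := m0_val N
  apply ZMod.val_injective
  rw [hvv, this]

lemma eig_pointwise {c : ℂ} {f : ZMod N → ℂ} (hf : Jbig N f = c • f) (x : ZMod N) :
    Bz N ((x.val : ℤ)) * f (x + 1) + Dz N ((x.val : ℤ)) * f x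
      + Bz N ((x.val : ℤ) - 1) * f (x - 1) = c * f x := by
  have := congrFun hf x
  rw [Jbig_eq] at this
  simpa using this

lemma determined (hodd : Odd N) (c : ℂ) (f : ZMod N → ℂ)
    (hf : Jbig N f = c • f) (h0 : f (m0 N + 1) = 0) : f = 0 := by
  have claim : ∀ t : ℕ, t < N → f (m0 N + 1 + (t : ZMod N)) = 0 := by
    intro t
    induction t using Nat.strong_induction_on with
    | _ t ih =>
      intro ht
      match t with
      | 0 => simpa using h0
      | Nat.succ s =>
        set x : ZMod N := m0 N + 1 + (s : ZMod N) with hxdef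
        have hxne : x ≠ m0 N := by
          intro h
          have : ((s + 1 : ℕ) : ZMod N) = 0 := by
            have := sub_eq_zero.mpr h
            push_cast
            rw [← this, hxdef]
            ring
          have hdvd := (ZMod.natCast_eq_zero_iff _ _).mp this
          have := Nat.le_of_dvd (Nat.succ_pos s) hdvd
          omega
        have heq := eig_pointwise N hf x
        have hfx : f x = 0 := ih s (by omega) (by omega)
        have hterm3 : Bz N ((x.val : ℤ) - 1) * f (x - 1) = 0 := by
          match s with
          | 0 =>
            have hBx : Bz N ((x.val : ℤ) - 1) = 0 := by
              rw [← Bz_val_sub]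
              have : x - 1 = m0 N := by rw [hxdef]; push_cast; ring
              rw [this]
              exact Bz_m0 N hodd
            rw [hBx, zero_mul]
          | Nat.succ r =>
            have : x - 1 = m0 N + 1 + (r : ZMod N) := by rw [hxdef]; push_cast; ring
            rw [this, ih r (by omega) (by omega), mul_zero]
        have hnext : f (x + 1) = 0 := by
          have hB := Bz_ne N hodd x hxne
          have : Bz N ((x.val : ℤ)) * f (x + 1) = 0 := by
            rw [hfx] at heq
            rw [hterm3] at heq
            simpa using heq
          exact (mul_eq_zero.mp this).resolve_left hB
        have : m0 N + 1 + ((s + 1 : ℕ) : ZMod N) = x + 1 := by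
          rw [hxdef]; push_cast; ring
        rw [this]
        exact hnext
  funext y
  have hy : m0 N + 1 + (((y - (m0 N + 1)).val : ℕ) : ZMod N) = y := by
    rw [ZMod.natCast_rightInverse]
    ring
  rw [← hy]
  exact claim _ (ZMod.val_lt _)

lemma dft_smul (c : ℂ) (f : ZMod N → ℂ) : dft N (c • f) = c • dft N f := by
  funext k
  rw [Pi.smul_apply, smul_eq_mul]
  unfold dft
  rw [Finset.mul_sum]
  apply Finset.sum_congr rfl
  intro a _
  simp only [Pi.smul_apply, smul_eq_mul]
  ring

lemma Jbig_sub_smul (u v : ZMod N → ℂ) (a : ℂ) :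
    Jbig N (u - a • v) = Jbig N u - a • Jbig N v := by
  funext x
  simp only [Jbig, Pi.sub_apply, Pi.smul_apply, smul_eq_mul]
  ring

theorem eig_dft (hodd : Odd N) (f : ZMod N → ℂ) (hne : f ≠ 0) (c : ℂ)
    (hf : Jbig N f = c • f) : ∃ d : ℂ, dft N f = d • f := by
  have h1 : f (m0 N + 1) ≠ 0 := fun h => hne (determined N hodd c f hf h)
  set w := dft N f with hwdef
  have hw : Jbig N w = c • w := by
    rw [hwdef, ← dft_Jbig_comm, hf, dft_smul]
  set d : ℂ := w (m0 N + 1) / f (m0 N + 1) with hddef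
  refine ⟨d, ?_⟩
  have hg : Jbig N (w - d • f) = c • (w - d • f) := by
    rw [Jbig_sub_smul, hw, hf]
    funext x
    simp only [Pi.sub_apply, Pi.smul_apply, smul_eq_mul]
    ring
  have hg0 : (w - d • f) (m0 N + 1) = 0 := by
    simp only [Pi.sub_apply, Pi.smul_apply, smul_eq_mul, hddef]
    field_simp
    ring
  have hz := determined N hodd c (w - d • f) hg hg0
  exact sub_eq_zero.mp hz
noncomputable def Mt : Matrix (ZMod N) (ZMod N) ℂ := fun x y =>
  (if y = x + 1 then Bz N ((x.val : ℤ)) else 0) +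
  (if y = x then Dz N ((x.val : ℤ)) else 0) +
  (if y = x - 1 then Bz N ((x.val : ℤ) - 1) else 0)

lemma Mt_mulVec (f : ZMod N → ℂ) : (Mt N).mulVec f = Jbig N f := by
  funext x
  rw [Jbig_eq]
  show (∑ y : ZMod N, Mt N x y * f y) = _
  simp only [Mt, add_mul, ite_mul, zero_mul, Finset.sum_add_distrib,
    Finset.sum_ite_eq', Finset.mem_univ, if_true]

lemma Mt_isHermitian : (Mt N).IsHermitian := by
  apply Matrix.IsHermitian.ext
  intro i j
  show (starRingEnd ℂ) (Mt N j i) = Mt N i j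
  have hreal : (starRingEnd ℂ) (Mt N j i) = Mt N j i := by
    simp only [Mt, map_add, apply_ite (starRingEnd ℂ), map_zero, Bz_conj, Dz_conj]
  rw [hreal]
  -- symmetry
  show Mt N j i = Mt N i j
  simp only [Mt]
  have c1 : (if i = j + 1 then Bz N ((j.val : ℤ)) else 0)
      = (if j = i - 1 then Bz N ((i.val : ℤ) - 1) else 0) := by
    by_cases h : i = j + 1
    · have h' : j = i - 1 := by rw [h]; ring
      rw [if_pos h, if_pos h']
      rw [h]
      exact (Bz_val_add N j).symm
    · have h' : ¬ j = i - 1 := fun hh => h (by rw [hh]; ring)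
      rw [if_neg h, if_neg h']
  have c2 : (if i = j then Dz N ((j.val : ℤ)) else 0)
      = (if j = i then Dz N ((i.val : ℤ)) else 0) := by
    by_cases h : i = j
    · rw [if_pos h, if_pos h.symm, h]
    · rw [if_neg h, if_neg (Ne.symm h)]
  have c3 : (if i = j - 1 then Bz N ((j.val : ℤ) - 1) else 0)
      = (if j = i + 1 then Bz N ((i.val : ℤ)) else 0) := by
    by_cases h : j = i + 1
    · have h' : i = j - 1 := by rw [h]; ring
      rw [if_pos h, if_pos h']
      rw [h]
      exact Bz_val_add N i
    · have h' : ¬ i = j - 1 := fun hh => h (by rw [hh]; ring)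
      rw [if_neg h, if_neg h']
  rw [c1, c2, c3]
  ring

/-- eigenvalues/eigenvectors via the spectral theorem -/
noncomputable def evals : ZMod N → ℝ := (Mt_isHermitian N).eigenvalues
noncomputable def evecs := (Mt_isHermitian N).eigenvectorBasis

lemma Jbig_evecs (j : ZMod N) :
    Jbig N (⇑(evecs N j)) = ((evals N j : ℂ)) • ⇑(evecs N j) := by
  unfold evecs evals
  have h := (Mt_isHermitian N).mulVec_eigenvectorBasis j
  rw [Mt_mulVec] at h
  rw [h]
  funext x
  simp [Pi.smul_apply, Complex.real_smul]

lemma evecs_orth (i j : ZMod N) (h : i ≠ j) :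
    ∑ x : ZMod N, (evecs N i) x * (starRingEnd ℂ) ((evecs N j) x) = 0 := by
  have horth : (inner ℂ ((evecs N) i) ((evecs N) j) : ℂ) = 0 := (evecs N).orthonormal.2 h
  rw [PiLp.inner_apply] at horth
  have h2 := congrArg (starRingEnd ℂ) horth
  rw [map_sum, map_zero] at h2
  rw [← h2]
  apply Finset.sum_congr rfl
  intro x _
  simp [mul_comm]

lemma evecs_norm (j : ZMod N) :
    ∑ x : ZMod N, (evecs N j) x * (starRingEnd ℂ) ((evecs N j) x) = 1 := by
  have horth := (evecs N).orthonormal.1 j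
  have h2 : (inner ℂ ((evecs N) j) ((evecs N) j) : ℂ) = 1 := by
    rw [inner_self_eq_norm_sq_to_K, horth]
    norm_num
  rw [PiLp.inner_apply] at h2
  have := congrArg (starRingEnd ℂ) h2
  rw [map_sum, map_one] at this
  rw [← this]
  apply Finset.sum_congr rfl
  intro x _
  simp [mul_comm]
  exact Complex.mul_conj' _

lemma evecs_ne_zero (j : ZMod N) : (⇑(evecs N j) : ZMod N → ℂ) ≠ 0 := by
  intro h
  have hx : ∀ x, (evecs N j) x = 0 := fun x => congrFun h x
  have h1 := evecs_norm N j
  have h0 : ∑ x : ZMod N, (evecs N j) x * (starRingEnd ℂ) ((evecs N j) x) = 0 :=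
    Finset.sum_eq_zero (fun x _ => by rw [hx x]; simp)
  rw [h0] at h1
  exact zero_ne_one h1
lemma evecs_span :
    Submodule.span ℂ (Set.range (fun j => (⇑(evecs N j) : ZMod N → ℂ))) = ⊤ := by
  rw [eq_top_iff]
  rintro f -
  have hf := congrArg WithLp.ofLp ((evecs N).sum_repr (WithLp.toLp 2 f))
  simp only [WithLp.ofLp_sum, WithLp.ofLp_smul, WithLp.ofLp_toLp] at hf
  rw [← hf]
  exact Submodule.sum_mem _ (fun j _ => Submodule.smul_mem _ _ (Submodule.subset_span ⟨j, rfl⟩))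

lemma Jbig_lin2 (u v : ZMod N → ℂ) (a b : ℂ) :
    Jbig N (a • u - b • v) = a • Jbig N u - b • Jbig N v := by
  funext x
  simp only [Jbig, Pi.sub_apply, Pi.smul_apply, smul_eq_mul]
  ring

lemma evals_inj (hodd : Odd N) : Function.Injective (evals N) := by
  intro i j hij
  by_contra hne
  set vi : ZMod N → ℂ := ⇑(evecs N i) with hvi
  set vj : ZMod N → ℂ := ⇑(evecs N j) with hvj
  set c : ℂ := ((evals N i : ℝ) : ℂ) with hc
  have hei : Jbig N vi = c • vi := Jbig_evecs N i
  have hej : Jbig N vj = c • vj := by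
    have := Jbig_evecs N j
    rw [← hij] at this
    exact this
  have hvi1 : vi (m0 N + 1) ≠ 0 :=
    fun h => evecs_ne_zero N i (determined N hodd c vi hei h)
  have hvj1 : vj (m0 N + 1) ≠ 0 :=
    fun h => evecs_ne_zero N j (determined N hodd c vj hej h)
  set g : ZMod N → ℂ := (vj (m0 N + 1)) • vi - (vi (m0 N + 1)) • vj with hg
  have hgeig : Jbig N g = c • g := by
    rw [hg, Jbig_lin2, hei, hej]
    funext x
    simp only [Pi.sub_apply, Pi.smul_apply, smul_eq_mul]
    ring
  have hg0 : g (m0 N + 1) = 0 := by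
    simp only [hg, Pi.sub_apply, Pi.smul_apply, smul_eq_mul]
    ring
  have hgz := determined N hodd c g hgeig hg0
  have heq : ∀ x, vj (m0 N + 1) * vi x = vi (m0 N + 1) * vj x := by
    intro x
    have := congrFun hgz x
    simp only [hg, Pi.sub_apply, Pi.smul_apply, smul_eq_mul, Pi.zero_apply] at this
    linear_combination this
  have hS : ∑ x : ZMod N, vi x * (starRingEnd ℂ) (vj x) = 0 := evecs_orth N i j hne
  have hT : ∑ x : ZMod N, vj x * (starRingEnd ℂ) (vj x) = 1 := evecs_norm N j
  have h1 : vj (m0 N + 1) * (∑ x : ZMod N, vi x * (starRingEnd ℂ) (vj x))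
      = vi (m0 N + 1) * (∑ x : ZMod N, vj x * (starRingEnd ℂ) (vj x)) := by
    rw [Finset.mul_sum, Finset.mul_sum]
    apply Finset.sum_congr rfl
    intro x _
    linear_combination ((starRingEnd ℂ) (vj x)) * heq x
  rw [hS, hT] at h1
  apply hvi1
  simpa using h1.symm

end St19

theorem statement19 (N : ℕ) [NeZero N] (hodd : Odd N) :
    (∃ (μ : Fin N → ℝ) (v : Fin N → (ZMod N → ℂ)),
      Function.Injective μ ∧ (∀ i, v i ≠ 0) ∧
      (∀ i, Jbig N (v i) = (μ i : ℂ) • v i) ∧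
      Submodule.span ℂ (Set.range v) = ⊤ ∧
      (∀ i j, i ≠ j → ∑ x : ZMod N, v i x * (starRingEnd ℂ) (v j x) = 0) ∧
      (∀ i, ∃ c : ℂ, dft N (v i) = c • v i)) ∧
    (∀ f : ZMod N → ℂ, f ≠ 0 → (∃ c : ℂ, Jbig N f = c • f) →
      ∃ d : ℂ, dft N f = d • f) := by
  
  have hcard : Fintype.card (ZMod N) = N := ZMod.card N
  set σ := (Fintype.equivFinOfCardEq hcard).symm with hσ
  constructor
  · refine ⟨fun i => St19.evals N (σ i), fun i => ⇑(St19.evecs N (σ i)),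
      ?_, ?_, ?_, ?_, ?_, ?_⟩
    · exact fun a b h => σ.injective (St19.evals_inj N hodd h)
    · exact fun i => St19.evecs_ne_zero N (σ i)
    · exact fun i => St19.Jbig_evecs N (σ i)
    · have hr : Set.range (fun i => (⇑(St19.evecs N (σ i)) : ZMod N → ℂ))
          = Set.range (fun j => (⇑(St19.evecs N j) : ZMod N → ℂ)) := by
        ext g
        constructor
        · rintro ⟨i, rfl⟩; exact ⟨σ i, rfl⟩
        · rintro ⟨j, rfl⟩; exact ⟨σ.symm j, by simp⟩
      rw [hr]
      exact St19.evecs_span N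
    · exact fun i j hij => St19.evecs_orth N (σ i) (σ j) (fun h => hij (σ.injective h))
    · exact fun i => St19.eig_dft N hodd _ (St19.evecs_ne_zero N (σ i)) _
        (St19.Jbig_evecs N (σ i))
  · rintro f hne ⟨c, hf⟩
    exact St19.eig_dft N hodd f hne c hf
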